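/- Let A and B be N×N positive semidefinite complex matrices with rank(A) ≤ r and rank(B) ≤ r. Then |tr(√A) − tr(√B)| ≤ r·√(3·‖A − B‖), where √A, √B denote the positive semidefinite square roots and ‖·‖ is the operator norm. -/

import Mathlib

open Matrix
open scoped Matrix.Norms.L2Operator ComplexOrder ComplexInnerProductSpace

/-- The square root of a positive semidefinite matrix (removed from Mathlib; old definition). -/
noncomputable def Matrix.PosSemidef.sqrt {n : Type*} {𝕜 : Type*} [Fintype n] [DecidableEq n]
    [RCLike 𝕜] {A : Matrix n n 𝕜} (hA : A.PosSemidef) : Matrix n n 𝕜 :=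
  hA.1.eigenvectorUnitary.1 * diagonal ((↑) ∘ (√·) ∘ hA.1.eigenvalues) *
    (star hA.1.eigenvectorUnitary : Matrix n n 𝕜)

lemma Matrix.PosSemidef.posSemidef_sqrt {n : Type*} {𝕜 : Type*} [Fintype n] [DecidableEq n]
    [RCLike 𝕜] {A : Matrix n n 𝕜} (hA : A.PosSemidef) : hA.sqrt.PosSemidef := by
  unfold Matrix.PosSemidef.sqrt
  have hD : (diagonal (((↑) : ℝ → 𝕜) ∘ (√·) ∘ hA.1.eigenvalues)).PosSemidef := by
    rw [posSemidef_diagonal_iff]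
    intro i
    simp only [Function.comp_apply]
    exact RCLike.ofReal_nonneg.mpr (Real.sqrt_nonneg _)
  have := hD.mul_mul_conjTranspose_same (hA.1.eigenvectorUnitary : Matrix n n 𝕜)
  rwa [← star_eq_conjTranspose, ← Unitary.coe_star] at this

lemma Matrix.PosSemidef.sqrt_mul_self {n : Type*} {𝕜 : Type*} [Fintype n] [DecidableEq n]
    [RCLike 𝕜] {A : Matrix n n 𝕜} (hA : A.PosSemidef) : hA.sqrt * hA.sqrt = A := by
  conv_rhs => rw [hA.1.spectral_theorem, Unitary.conjStarAlgAut_apply]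
  unfold Matrix.PosSemidef.sqrt
  have hU : (star hA.1.eigenvectorUnitary : Matrix n n 𝕜) * hA.1.eigenvectorUnitary = 1 :=
    Unitary.coe_star_mul_self _
  rw [show ∀ a b c d e f : Matrix n n 𝕜, a * b * c * (d * e * f) = a * (b * (c * d) * e) * f from
    by intros; simp only [mul_assoc], hU, mul_one, diagonal_mul_diagonal]
  congr 2
  congr 1
  funext i
  simp only [Function.comp_apply]
  rw [← RCLike.ofReal_mul, Real.mul_self_sqrt (hA.eigenvalues_nonneg i)]

private lemma trace_re_eq_sum' {N : ℕ} (M : Matrix (Fin N) (Fin N) ℂ) (hM : M.IsHermitian) :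
    M.trace.re = ∑ i, hM.eigenvalues i := by
  nth_rewrite 1 [hM.spectral_theorem]
  rw [Unitary.conjStarAlgAut_apply]
  rw [Matrix.trace_mul_cycle]
  rw [Unitary.coe_star_mul_self]
  simp [Matrix.trace, Matrix.diag]

private lemma sqrt_mulVec_eq_zero' {N : ℕ} {A : Matrix (Fin N) (Fin N) ℂ} (hA : A.PosSemidef)
    (v : Fin N → ℂ) (h : A *ᵥ v = 0) : hA.sqrt *ᵥ v = 0 := by
  have h1 : star (hA.sqrt *ᵥ v) ⬝ᵥ (hA.sqrt *ᵥ v) = 0 := by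
    rw [star_mulVec, dotProduct_mulVec, vecMul_vecMul, hA.posSemidef_sqrt.1.eq,
      ← dotProduct_mulVec, ← mulVec_mulVec, mulVec_mulVec, hA.sqrt_mul_self, h, dotProduct_zero]
  exact dotProduct_star_self_eq_zero.mp h1

private lemma trace_re_le' {N : ℕ} (M : Matrix (Fin N) (Fin N) ℂ) (hM : M.IsHermitian) {s : ℝ}
    (hs : 0 ≤ s) (heig : ∀ i, hM.eigenvalues i ≤ s) {r : ℕ}
    (hcard : Fintype.card {i // 0 < hM.eigenvalues i} ≤ r) :
    M.trace.re ≤ r * s := by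
  classical
  rw [trace_re_eq_sum' M hM]
  have h1 : ∑ i, hM.eigenvalues i
      ≤ ∑ i ∈ Finset.univ.filter (fun i => 0 < hM.eigenvalues i), hM.eigenvalues i := by
    rw [← Finset.sum_filter_add_sum_filter_not Finset.univ (fun i => 0 < hM.eigenvalues i)]
    have h2 : ∑ i ∈ Finset.univ.filter (fun i => ¬ 0 < hM.eigenvalues i), hM.eigenvalues i ≤ 0 :=
      Finset.sum_nonpos fun i hi => le_of_not_gt (Finset.mem_filter.mp hi).2
    linarith
  refine h1.trans ?_
  have h3 : ∑ i ∈ Finset.univ.filter (fun i => 0 < hM.eigenvalues i), hM.eigenvalues i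
      ≤ (Finset.univ.filter (fun i => 0 < hM.eigenvalues i)).card • s :=
    Finset.sum_le_card_nsmul _ _ s fun i _ => heig i
  rw [nsmul_eq_mul] at h3
  refine h3.trans ?_
  have h4 : (Finset.univ.filter (fun i => 0 < hM.eigenvalues i)).card ≤ r := by
    rw [← Fintype.card_subtype]; exact hcard
  exact mul_le_mul_of_nonneg_right (by exact_mod_cast h4) hs

lemma eig_bound {N : ℕ} {A B : Matrix (Fin N) (Fin N) ℂ} (hA : A.PosSemidef) (hB : B.PosSemidef)
    (hM : (hA.sqrt - hB.sqrt).IsHermitian) (i : Fin N) :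
    |hM.eigenvalues i| ≤ Real.sqrt ‖A - B‖ := by
  set M := hA.sqrt - hB.sqrt with hMdef
  set v : EuclideanSpace ℂ (Fin N) := hM.eigenvectorBasis i with hv
  set ν : ℝ := hM.eigenvalues i with hν
  have hv1 : ‖v‖ = 1 := hM.eigenvectorBasis.orthonormal.1 i
  have hvv : star (⇑v : Fin N → ℂ) ⬝ᵥ ⇑v = 1 := by
    have : (inner ℂ v v : ℂ) = 1 := by
      rw [inner_self_eq_norm_sq_to_K, hv1]; norm_num
    rw [dotProduct_comm]; exact this
  have hmv : M *ᵥ ⇑v = (ν : ℝ) • ⇑v := hM.mulVec_eigenvectorBasis i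
  set a : ℂ := star (⇑v : Fin N → ℂ) ⬝ᵥ (hA.sqrt *ᵥ ⇑v) with hadef
  set b : ℂ := star (⇑v : Fin N → ℂ) ⬝ᵥ (hB.sqrt *ᵥ ⇑v) with hbdef
  have ha : 0 ≤ a := hA.posSemidef_sqrt.dotProduct_mulVec_nonneg _
  have hb : 0 ≤ b := hB.posSemidef_sqrt.dotProduct_mulVec_nonneg _
  have ha' : a = (a.re : ℂ) := by
    rw [Complex.le_def] at ha; exact (Complex.ext_iff.mpr ⟨rfl, by simpa using ha.2.symm⟩)
  have hb' : b = (b.re : ℂ) := by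
    rw [Complex.le_def] at hb; exact (Complex.ext_iff.mpr ⟨rfl, by simpa using hb.2.symm⟩)
  have ha0 : 0 ≤ a.re := by rw [Complex.le_def] at ha; simpa using ha.1
  have hb0 : 0 ≤ b.re := by rw [Complex.le_def] at hb; simpa using hb.1
  -- ν = a.re - b.re
  have hsub : star (⇑v : Fin N → ℂ) ⬝ᵥ (M *ᵥ ⇑v) = a - b := by
    rw [hMdef, sub_mulVec, dotProduct_sub]
  have hsub' : star (⇑v : Fin N → ℂ) ⬝ᵥ (M *ᵥ ⇑v) = (ν : ℂ) := by
    rw [hmv, dotProduct_smul, hvv]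
    simp [Complex.real_smul]
  have hνab : (ν : ℂ) = a - b := by rw [← hsub', hsub]
  have hνre : ν = a.re - b.re := by
    have := congrArg Complex.re hνab; simpa using this
  -- the key identity
  have hfact : A - B = hA.sqrt * M + M * hB.sqrt := by
    rw [hMdef, mul_sub, sub_mul, hA.sqrt_mul_self, hB.sqrt_mul_self]
    abel
  have hterm1 : star (⇑v : Fin N → ℂ) ⬝ᵥ ((hA.sqrt * M) *ᵥ ⇑v) = (ν : ℂ) * a := by
    rw [← mulVec_mulVec, hmv, mulVec_smul, dotProduct_smul]
    simp [Complex.real_smul, hadef]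
  have hvM : star (⇑v : Fin N → ℂ) ᵥ* M = (ν : ℝ) • star (⇑v : Fin N → ℂ) := by
    conv_lhs => rw [← hM.eq, ← star_mulVec, hmv]
    ext j
    simp [Pi.smul_apply, star_smul]
  have hterm2 : star (⇑v : Fin N → ℂ) ⬝ᵥ ((M * hB.sqrt) *ᵥ ⇑v) = (ν : ℂ) * b := by
    rw [← mulVec_mulVec, dotProduct_mulVec, hvM, smul_dotProduct, ← hbdef]
    simp [Complex.real_smul]
  have hABv : star (⇑v : Fin N → ℂ) ⬝ᵥ ((A - B) *ᵥ ⇑v) = (ν : ℂ) * (a + b) := by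
    rw [hfact, add_mulVec, dotProduct_add, hterm1, hterm2]; ring
  -- norm bound
  have hnorm : ‖star (⇑v : Fin N → ℂ) ⬝ᵥ ((A - B) *ᵥ ⇑v)‖ ≤ ‖A - B‖ := by
    have h1 := norm_inner_le_norm (𝕜 := ℂ) v ((EuclideanSpace.equiv (Fin N) ℂ).symm ((A - B) *ᵥ ⇑v))
    have h2 := (A - B).l2_opNorm_mulVec v
    have h3 : (inner ℂ v ((EuclideanSpace.equiv (Fin N) ℂ).symm ((A - B) *ᵥ ⇑v)) : ℂ)
        = star (⇑v : Fin N → ℂ) ⬝ᵥ ((A - B) *ᵥ ⇑v) := by rw [dotProduct_comm]; rfl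
    rw [h3, hv1] at h1
    calc ‖star (⇑v : Fin N → ℂ) ⬝ᵥ ((A - B) *ᵥ ⇑v)‖ ≤ 1 * ‖(EuclideanSpace.equiv (Fin N) ℂ).symm ((A - B) *ᵥ ⇑v)‖ := h1
      _ ≤ 1 * (‖A - B‖ * 1) := by rw [one_mul, one_mul]; simpa [hv1] using h2
      _ = ‖A - B‖ := by ring
  have habs : |ν| ≤ a.re + b.re := by
    rw [hνre, abs_sub_le_iff]; constructor <;> linarith
  have hsq : ν ^ 2 ≤ ‖A - B‖ := by
    have h4 : ‖(ν : ℂ) * (a + b)‖ = |ν| * (a.re + b.re) := by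
      have hab : a + b = ((a.re + b.re : ℝ) : ℂ) := by
        rw [Complex.ofReal_add, ← ha', ← hb']
      rw [hab, ← Complex.ofReal_mul, Complex.norm_real, Real.norm_eq_abs, abs_mul,
        abs_of_nonneg (by linarith : (0:ℝ) ≤ a.re + b.re)]
    calc ν ^ 2 = |ν| * |ν| := by rw [pow_two, ← abs_mul_abs_self]
      _ ≤ |ν| * (a.re + b.re) := by
          apply mul_le_mul_of_nonneg_left habs (abs_nonneg _)
      _ = ‖(ν : ℂ) * (a + b)‖ := h4.symm
      _ = ‖star (⇑v : Fin N → ℂ) ⬝ᵥ ((A - B) *ᵥ ⇑v)‖ := by rw [hABv]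
      _ ≤ ‖A - B‖ := hnorm
  exact Real.abs_le_sqrt hsq

lemma card_le_rank {N : ℕ} (C M : Matrix (Fin N) (Fin N) ℂ) (hM : M.IsHermitian)
    (hker : ∀ v : Fin N → ℂ, C *ᵥ v = 0 → (star v ⬝ᵥ (M *ᵥ v)).re ≤ 0) :
    Fintype.card {i // 0 < hM.eigenvalues i} ≤ C.rank := by
  classical
  set P := {i // 0 < hM.eigenvalues i} with hP
  set w : P → EuclideanSpace ℂ (Fin N) := fun i => hM.eigenvectorBasis i.1 with hw
  have hwo : Orthonormal ℂ w := hM.eigenvectorBasis.orthonormal.comp _ Subtype.coe_injective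
  let φ₀ : (P → ℂ) →ₗ[ℂ] EuclideanSpace ℂ (Fin N) := Fintype.linearCombination ℂ w
  have hφ₀ : ∀ c : P → ℂ, φ₀ c = ∑ i : P, c i • w i := fun c => rfl
  -- action of M on φ₀ c
  have teig : ∀ i : P, Matrix.toEuclideanLin M (w i) = (hM.eigenvalues i.1 : ℂ) • w i := by
    intro i
    apply (WithLp.equiv 2 (Fin N → ℂ)).injective
    change M *ᵥ (w i).ofLp = ((hM.eigenvalues i.1 : ℂ) • w i).ofLp
    have := hM.mulVec_eigenvectorBasis i.1
    rw [hw]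
    simp only []
    rw [this]
    ext j
    simp [Complex.real_smul]
  have hMx : ∀ c : P → ℂ, Matrix.toEuclideanLin M (φ₀ c)
      = ∑ i : P, (c i * (hM.eigenvalues i.1 : ℂ)) • w i := by
    intro c
    rw [hφ₀, map_sum]
    refine Finset.sum_congr rfl fun i _ => ?_
    rw [_root_.map_smul, teig, smul_smul]
  have key : ∀ c : P → ℂ, (inner ℂ (φ₀ c) (Matrix.toEuclideanLin M (φ₀ c)) : ℂ).re
      = ∑ i : P, Complex.normSq (c i) * hM.eigenvalues i.1 := by
    intro c
    have h1 : (inner ℂ (φ₀ c) (Matrix.toEuclideanLin M (φ₀ c)) : ℂ)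
        = ∑ i : P, (starRingEnd ℂ) (c i) * (c i * (hM.eigenvalues i.1 : ℂ)) := by
      rw [hMx, hφ₀, sum_inner]
      refine Finset.sum_congr rfl fun i _ => ?_
      rw [inner_smul_left, hwo.inner_right_fintype]
    rw [h1, Complex.re_sum]
    refine Finset.sum_congr rfl fun i _ => ?_
    rw [← mul_assoc, ← Complex.normSq_eq_conj_mul_self, ← Complex.ofReal_mul, Complex.ofReal_re]
  -- injectivity
  let ψ : (P → ℂ) →ₗ[ℂ] (Fin N → ℂ) :=
    C.mulVecLin ∘ₗ (WithLp.linearEquiv 2 ℂ (Fin N → ℂ)).toLinearMap ∘ₗ φ₀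
  have hinj : Function.Injective ψ := by
    rw [← LinearMap.ker_eq_bot, LinearMap.ker_eq_bot']
    intro c hc
    by_contra hcne
    obtain ⟨i0, hi0⟩ := Function.ne_iff.mp hcne
    have hzero : C *ᵥ (WithLp.equiv 2 (Fin N → ℂ)) (φ₀ c) = 0 := hc
    have hle := hker _ hzero
    have hdot : (star ((WithLp.equiv 2 (Fin N → ℂ)) (φ₀ c)) ⬝ᵥ
        (M *ᵥ (WithLp.equiv 2 (Fin N → ℂ)) (φ₀ c))).re
        = (inner ℂ (φ₀ c) (Matrix.toEuclideanLin M (φ₀ c)) : ℂ).re := by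
      congr 1
      rw [dotProduct_comm]; rfl
    rw [hdot, key] at hle
    have hpos : 0 < ∑ i : P, Complex.normSq (c i) * hM.eigenvalues i.1 := by
      apply Finset.sum_pos'
      · intro i _
        exact mul_nonneg (Complex.normSq_nonneg _) (le_of_lt i.2)
      · exact ⟨i0, Finset.mem_univ _, mul_pos (by simpa [Complex.normSq_pos] using hi0) i0.2⟩
    linarith
  -- count
  calc Fintype.card P = Module.finrank ℂ (P → ℂ) := (Module.finrank_pi ℂ).symm
    _ = Module.finrank ℂ (LinearMap.range ψ) := (LinearMap.finrank_range_of_inj hinj).symm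
    _ ≤ Module.finrank ℂ (LinearMap.range C.mulVecLin) := by
        apply Submodule.finrank_mono
        rw [LinearMap.range_comp (g := C.mulVecLin)]
        exact LinearMap.map_le_range
    _ = C.rank := rfl


theorem stmt9 {N : ℕ} (r : ℕ) (A B : Matrix (Fin N) (Fin N) ℂ)
    (hA : A.PosSemidef) (hB : B.PosSemidef)
    (hrA : A.rank ≤ r) (hrB : B.rank ≤ r) :
    |(hA.sqrt.trace).re - (hB.sqrt.trace).re| ≤ r * Real.sqrt (3 * ‖A - B‖) := by
  have hd0 : (0:ℝ) ≤ ‖A - B‖ := norm_nonneg _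
  set s := Real.sqrt (3 * ‖A - B‖) with hs
  have hs0 : 0 ≤ s := Real.sqrt_nonneg _
  have hM : (hA.sqrt - hB.sqrt).IsHermitian := hA.posSemidef_sqrt.1.sub hB.posSemidef_sqrt.1
  have hM' : (hB.sqrt - hA.sqrt).IsHermitian := hB.posSemidef_sqrt.1.sub hA.posSemidef_sqrt.1
  have hb1 : ∀ i, hM.eigenvalues i ≤ s := by
    intro i
    refine (le_abs_self _).trans ((eig_bound hA hB hM i).trans ?_)
    exact Real.sqrt_le_sqrt (by linarith)
  have hb2 : ∀ i, hM'.eigenvalues i ≤ s := by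
    intro i
    refine (le_abs_self _).trans ((eig_bound hB hA hM' i).trans ?_)
    rw [norm_sub_rev]
    exact Real.sqrt_le_sqrt (by linarith)
  have hker1 : ∀ v : Fin N → ℂ, A *ᵥ v = 0 →
      (star v ⬝ᵥ ((hA.sqrt - hB.sqrt) *ᵥ v)).re ≤ 0 := by
    intro v hv
    rw [sub_mulVec, dotProduct_sub, sqrt_mulVec_eq_zero' hA v hv, dotProduct_zero, zero_sub,
      Complex.neg_re, neg_nonpos]
    exact hB.posSemidef_sqrt.re_dotProduct_nonneg v
  have hker2 : ∀ v : Fin N → ℂ, B *ᵥ v = 0 →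
      (star v ⬝ᵥ ((hB.sqrt - hA.sqrt) *ᵥ v)).re ≤ 0 := by
    intro v hv
    rw [sub_mulVec, dotProduct_sub, sqrt_mulVec_eq_zero' hB v hv, dotProduct_zero, zero_sub,
      Complex.neg_re, neg_nonpos]
    exact hA.posSemidef_sqrt.re_dotProduct_nonneg v
  have hc1 : Fintype.card {i // 0 < hM.eigenvalues i} ≤ r :=
    (card_le_rank A _ hM hker1).trans hrA
  have hc2 : Fintype.card {i // 0 < hM'.eigenvalues i} ≤ r :=
    (card_le_rank B _ hM' hker2).trans hrB
  have ht1 : ((hA.sqrt - hB.sqrt).trace).re ≤ r * s := trace_re_le' _ hM hs0 hb1 hc1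
  have ht2 : ((hB.sqrt - hA.sqrt).trace).re ≤ r * s := trace_re_le' _ hM' hs0 hb2 hc2
  rw [Matrix.trace_sub, Complex.sub_re] at ht1 ht2
  rw [abs_le]
  constructor <;> linarith
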